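/- For nonnegative integers n and k, B_n^{(-k)} = ∑_{j=0}^{min(n,k)} (j!)^2 S(n+1, j+1) S(k+1, j+1), where S denotes Stirling numbers of the second kind. -/

import Mathlib

open Real Filter Topology Finset

/-- Polylogarithm `Li_k(z) = ∑_{m≥1} z^m / m^k`. -/
noncomputable def Li (k : ℤ) (z : ℝ) : ℝ := ∑' m : ℕ, z ^ (m + 1) / ((m + 1 : ℝ)) ^ k

/-- Stirling numbers of the second kind via the explicit formula. -/
noncomputable def S (n m : ℕ) : ℝ :=
  ((-1) ^ m / (m.factorial : ℝ)) *
    ∑ l ∈ Finset.range (m + 1), (-1) ^ l * (m.choose l : ℝ) * (l : ℝ) ^ n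

namespace PolyB

lemma neg_one_sq_pow (m : ℕ) : (-1:ℝ)^m * (-1:ℝ)^m = 1 := by
  rw [← pow_add, ← two_mul, pow_mul]; norm_num

lemma geom_aux (k : ℕ) {z : ℝ} (hz : |z| < 1) :
    Summable (fun m : ℕ => ((m:ℝ)+1)^k * z^m) := by
  have h := summable_pow_mul_geometric_of_norm_lt_one (R := ℝ) k (r := z)
    (by rwa [Real.norm_eq_abs])
  have h2 : Summable (fun m : ℕ => ((m+1:ℕ):ℝ)^k * z^(m+1)) := (summable_nat_add_iff 1).mpr h
  by_cases hz0 : z = 0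
  · subst hz0
    apply summable_of_ne_finset_zero (s := {0})
    intro m hm
    simp only [Finset.mem_singleton] at hm
    simp [zero_pow hm]
  · have h3 := h2.mul_left z⁻¹
    refine h3.congr fun m => ?_
    push_cast
    field_simp
    ring

/-- Stirling numbers of the second kind, by recurrence. -/
def St : ℕ → ℕ → ℕ
  | 0, 0 => 1
  | 0, _+1 => 0
  | _+1, 0 => 0
  | n+1, m+1 => (m+1) * St n (m+1) + St n m

@[simp] lemma St_zero_zero : St 0 0 = 1 := rfl
@[simp] lemma St_zero_succ (m : ℕ) : St 0 (m+1) = 0 := rfl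
@[simp] lemma St_succ_zero (n : ℕ) : St (n+1) 0 = 0 := rfl
lemma St_succ_succ (n m : ℕ) : St (n+1) (m+1) = (m+1) * St n (m+1) + St n m := rfl

lemma St_eq_zero {n m : ℕ} (h : n < m) : St n m = 0 := by
  induction n generalizing m with
  | zero => cases m with | zero => omega | succ m => rfl
  | succ n ih =>
    cases m with
    | zero => omega
    | succ m =>
      rw [St_succ_succ, ih (by omega), ih (by omega)]
      simp
/-- explicit formula for Stirling numbers -/
lemma es_eq (n : ℕ) : ∀ m : ℕ,
    (∑ l ∈ range (m+1), (-1:ℤ)^l * (m.choose l : ℤ) * (l:ℤ)^n)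
      = (-1)^m * (m.factorial : ℤ) * St n m := by
  induction n with
  | zero =>
    intro m
    simp only [pow_zero, mul_one]
    rw [Int.alternating_sum_range_choose]
    cases m with
    | zero => simp
    | succ m => simp [St_zero_succ]
  | succ n ih =>
    have Q : ∀ m : ℕ, (∑ l ∈ range (m+1), (-1:ℤ)^l * (m.choose l : ℤ) * ((l:ℤ)+1)^n)
        = (-1)^m * (((m+1).factorial : ℤ) * St n (m+1) + (m.factorial : ℤ) * St n m) := by
      intro m
      have key : ∀ l : ℕ, (-1:ℤ)^l * (m.choose l : ℤ) * ((l:ℤ)+1)^n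
          = -((-1:ℤ)^(l+1) * ((m+1).choose (l+1) : ℤ) * (((l+1):ℕ):ℤ)^n)
              + ((-1:ℤ)^(l+1) * (m.choose (l+1) : ℤ) * (((l+1):ℕ):ℤ)^n) := by
        intro l
        have hc : ((m+1).choose (l+1) : ℤ) = (m.choose l : ℤ) + (m.choose (l+1) : ℤ) := by
          rw [Nat.choose_succ_succ]; push_cast; ring
        rw [hc]; push_cast; ring
      rw [Finset.sum_congr rfl fun l _ => key l, Finset.sum_add_distrib]
      have e1 : (∑ l ∈ range (m+1),
            -((-1:ℤ)^(l+1) * ((m+1).choose (l+1) : ℤ) * (((l+1):ℕ):ℤ)^n))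
          = -((∑ j ∈ range (m+2), (-1:ℤ)^j * ((m+1).choose j : ℤ) * (j:ℤ)^n) - (0:ℤ)^n) := by
        rw [Finset.sum_range_succ' (fun j => (-1:ℤ)^j * ((m+1).choose j : ℤ) * (j:ℤ)^n) (m+1),
          Finset.sum_neg_distrib]
        push_cast [Nat.choose_zero_right, pow_zero]
        ring
      have e2 : (∑ l ∈ range (m+1),
            ((-1:ℤ)^(l+1) * (m.choose (l+1) : ℤ) * (((l+1):ℕ):ℤ)^n))
          = (∑ j ∈ range (m+1), (-1:ℤ)^j * (m.choose j : ℤ) * (j:ℤ)^n) - (0:ℤ)^n := by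
        have h1 := Finset.sum_range_succ' (fun j => (-1:ℤ)^j * (m.choose j : ℤ) * (j:ℤ)^n) (m+1)
        rw [Finset.sum_range_succ (fun j => (-1:ℤ)^j * (m.choose j : ℤ) * (j:ℤ)^n) (m+1)] at h1
        rw [Nat.choose_succ_self] at h1
        simp only [Nat.choose_zero_right, Nat.cast_one, Nat.cast_zero, mul_zero, zero_mul,
          add_zero, one_mul, pow_zero] at h1
        push_cast at h1 ⊢
        linarith
      rw [e1, e2, ih (m+1), ih m]
      have : ((m+1).factorial : ℤ) = (m+1) * m.factorial := by
        rw [Nat.factorial_succ]; push_cast; ring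
      rw [this]; ring
    intro m
    cases m with
    | zero => simp
    | succ m =>
      rw [Finset.sum_range_succ' (fun l => (-1:ℤ)^l * ((m+1).choose l : ℤ) * (l:ℤ)^(n+1)) (m+1)]
      have key : ∀ l : ℕ, (-1:ℤ)^(l+1) * ((m+1).choose (l+1) : ℤ) * (((l+1):ℕ):ℤ)^(n+1)
          = (-(m+1)) * ((-1:ℤ)^l * (m.choose l : ℤ) * ((l:ℤ)+1)^n) := by
        intro l
        have hc : ((m+1) * (m.choose l) : ℤ) = ((m+1).choose (l+1) : ℤ) * (l+1) := by
          exact_mod_cast congrArg (Nat.cast : ℕ → ℤ) (Nat.add_one_mul_choose_eq m l)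
        push_cast at hc ⊢
        calc (-1:ℤ)^(l+1) * ((m+1).choose (l+1) : ℤ) * ((l:ℤ)+1)^(n+1)
            = (-1)^(l+1) * (((m+1).choose (l+1) : ℤ) * ((l:ℤ)+1)) * ((l:ℤ)+1)^n := by ring
          _ = (-1)^(l+1) * ((m+1) * (m.choose l : ℤ)) * ((l:ℤ)+1)^n := by rw [← hc]
          _ = (-(m+1)) * ((-1:ℤ)^l * (m.choose l : ℤ) * ((l:ℤ)+1)^n) := by ring
      rw [Finset.sum_congr rfl fun l _ => key l, ← Finset.mul_sum, Q m]
      rw [St_succ_succ]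
      have h2 : ((m+1).factorial : ℤ) = (m+1) * m.factorial := by
        rw [Nat.factorial_succ]; push_cast; ring
      push_cast [h2]
      ring
lemma pow_succ_eq (k : ℕ) : ∀ m : ℕ,
    (m+1)^k = ∑ j ∈ range (k+1), St (k+1) (j+1) * j.factorial * m.choose j := by
  induction k with
  | zero => intro m; simp [St_succ_succ]
  | succ k ih =>
    intro m
    have step : ∀ j : ℕ, St (k+1) (j+1) * j.factorial * m.choose j * (m+1)
        = St (k+1) (j+1) * ((j+1).factorial * m.choose (j+1))
          + (j+1) * St (k+1) (j+1) * (j.factorial * m.choose j) := by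
      intro j
      have h1 : (m+1) * m.choose j = (m.choose j + m.choose (j+1)) * (j+1) := by
        rw [← Nat.choose_succ_succ]
        exact Nat.add_one_mul_choose_eq m j
      have h2 : (j+1).factorial = (j+1) * j.factorial := Nat.factorial_succ j
      calc St (k+1) (j+1) * j.factorial * m.choose j * (m+1)
          = St (k+1) (j+1) * j.factorial * ((m+1) * m.choose j) := by ring
        _ = St (k+1) (j+1) * j.factorial * ((m.choose j + m.choose (j+1)) * (j+1)) := by rw [h1]
        _ = St (k+1) (j+1) * (((j+1) * j.factorial) * m.choose (j+1))
            + (j+1) * St (k+1) (j+1) * (j.factorial * m.choose j) := by ring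
        _ = St (k+1) (j+1) * ((j+1).factorial * m.choose (j+1))
            + (j+1) * St (k+1) (j+1) * (j.factorial * m.choose j) := by rw [← h2]
    calc (m+1)^(k+1)
        = (∑ j ∈ range (k+1), St (k+1) (j+1) * j.factorial * m.choose j) * (m+1) := by
          rw [pow_succ, ih]
      _ = ∑ j ∈ range (k+1), (St (k+1) (j+1) * ((j+1).factorial * m.choose (j+1))
            + (j+1) * St (k+1) (j+1) * (j.factorial * m.choose j)) := by
          rw [Finset.sum_mul]; exact Finset.sum_congr rfl fun j _ => step j
      _ = (∑ j ∈ range (k+1), St (k+1) (j+1) * ((j+1).factorial * m.choose (j+1)))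
            + ∑ j ∈ range (k+1), (j+1) * St (k+1) (j+1) * (j.factorial * m.choose j) :=
          Finset.sum_add_distrib
      _ = (∑ j ∈ range (k+2), St (k+1) j * (j.factorial * m.choose j))
            + ∑ j ∈ range (k+2), (j+1) * St (k+1) (j+1) * (j.factorial * m.choose j) := by
          rw [Finset.sum_range_succ' (fun j => St (k+1) j * (j.factorial * m.choose j)) (k+1),
            Finset.sum_range_succ
              (fun j => (j+1) * St (k+1) (j+1) * (j.factorial * m.choose j)) (k+1)]
          rw [St_eq_zero (show k+1 < k+2 by omega)]
          simp
      _ = ∑ j ∈ range (k+2), St (k+2) (j+1) * j.factorial * m.choose j := by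
          rw [← Finset.sum_add_distrib]
          refine Finset.sum_congr rfl fun j _ => ?_
          rw [St_succ_succ (k+1) j]; ring

lemma idA : ∀ n j : ℕ,
    (∑ m ∈ range (n+1), (-1:ℤ)^(n+m) * m.factorial * St n m * m.choose j)
      = j.factorial * St (n+1) (j+1) := by
  intro n
  induction n with
  | zero =>
    intro j
    have h1 : St (0+1) (j+1) = (j+1) * St 0 (j+1) + St 0 j := St_succ_succ 0 j
    cases j with
    | zero => simp [h1]
    | succ j => simp [h1]
  | succ n ih =>
    have key : ∀ j : ℕ,
        (∑ m ∈ range (n+2), (-1:ℤ)^(n+1+m) * m.factorial * St (n+1) m * m.choose j)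
          = ∑ m ∈ range (n+1), (-1:ℤ)^(n+m) * m.factorial * St n m
              * ((((m:ℤ)+1) * (((m+1).choose j : ℕ) : ℤ)) - ((m:ℤ) * ((m.choose j : ℕ) : ℤ))) := by
      intro j
      have t1 : ∀ m' ∈ range (n+1), ((-1:ℤ)^(n+1+(m'+1)) * (((m'+1).factorial : ℕ) : ℤ)
            * ((St (n+1) (m'+1) : ℕ) : ℤ) * (((m'+1).choose j : ℕ) : ℤ))
          = ((-1:ℤ)^(n+m') * ((m'.factorial : ℕ) : ℤ) * ((St n m' : ℕ) : ℤ)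
              * ((((m':ℕ):ℤ)+1) * (((m'+1).choose j : ℕ) : ℤ)))
            + (-((-1:ℤ)^(n+(m'+1)) * (((m'+1).factorial : ℕ) : ℤ) * (((m'+1):ℕ) : ℤ)
                * ((St n (m'+1) : ℕ) : ℤ) * (((m'+1).choose j : ℕ) : ℤ))) := by
        intro m' _
        rw [St_succ_succ n m']
        have hf : (((m'+1).factorial : ℕ) : ℤ) = (((m':ℕ):ℤ)+1) * ((m'.factorial : ℕ) : ℤ) := by
          rw [Nat.factorial_succ]; push_cast; ring
        rw [hf]
        push_cast
        ring
      have e0 := Finset.sum_range_succ' (fun m => (-1:ℤ)^(n+1+m) * ((m.factorial : ℕ) : ℤ)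
        * ((St (n+1) m : ℕ) : ℤ) * ((m.choose j : ℕ) : ℤ)) (n+1)
      rw [e0, St_succ_zero]
      simp only [Nat.cast_zero, mul_zero, zero_mul, add_zero]
      rw [Finset.sum_congr rfl t1, Finset.sum_add_distrib]
      have e1 := Finset.sum_range_succ' (fun m => -((-1:ℤ)^(n+m) * ((m.factorial : ℕ) : ℤ)
        * ((m:ℕ) : ℤ) * ((St n m : ℕ) : ℤ) * ((m.choose j : ℕ) : ℤ))) (n+1)
      have e2 := Finset.sum_range_succ (fun m => -((-1:ℤ)^(n+m) * ((m.factorial : ℕ) : ℤ)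
        * ((m:ℕ) : ℤ) * ((St n m : ℕ) : ℤ) * ((m.choose j : ℕ) : ℤ))) (n+1)
      rw [St_eq_zero (show n < n+1 by omega)] at e2
      simp only [Nat.cast_zero, mul_zero, zero_mul, neg_zero, add_zero] at e1 e2
      rw [← e1, e2, ← Finset.sum_add_distrib]
      refine Finset.sum_congr rfl fun m _ => ?_
      push_cast
      ring
    intro j
    cases j with
    | zero =>
      rw [key 0]
      have e : ∀ m ∈ range (n+1), (-1:ℤ)^(n+m) * (m.factorial : ℤ) * (St n m : ℤ)
          * ((((m:ℤ)+1) * (((m+1).choose 0 : ℕ) : ℤ)) - ((m:ℤ) * ((m.choose 0 : ℕ) : ℤ)))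
          = (-1:ℤ)^(n+m) * (m.factorial : ℤ) * (St n m : ℤ) * ((m.choose 0 : ℕ) : ℤ) := by
        intro m _
        simp [Nat.choose_zero_right]
      rw [Finset.sum_congr rfl e, ih 0]
      have hs : St (n+1+1) (0+1) = (0+1) * St (n+1) (0+1) + St (n+1) 0 := St_succ_succ (n+1) 0
      rw [hs, St_succ_zero]
      push_cast
      ring
    | succ j =>
      rw [key (j+1)]
      have e : ∀ m ∈ range (n+1), (-1:ℤ)^(n+m) * (m.factorial : ℤ) * (St n m : ℤ)
          * ((((m:ℤ)+1) * (((m+1).choose (j+1) : ℕ) : ℤ)) - ((m:ℤ) * ((m.choose (j+1) : ℕ) : ℤ)))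
          = ((j:ℤ)+2) * ((-1:ℤ)^(n+m) * (m.factorial : ℤ) * (St n m : ℤ) * ((m.choose (j+1) : ℕ) : ℤ))
            + ((j:ℤ)+1) * ((-1:ℤ)^(n+m) * (m.factorial : ℤ) * (St n m : ℤ) * ((m.choose j : ℕ) : ℤ)) := by
        intro m _
        have h1 : ((m+1) * m.choose j : ℕ) = ((m+1).choose (j+1)) * (j+1) := Nat.add_one_mul_choose_eq m j
        have h2 : ((m+1).choose (j+1) : ℕ) = m.choose j + m.choose (j+1) := Nat.choose_succ_succ m j
        have h1' : ((m:ℤ)+1) * (m.choose j : ℤ) = ((m.choose j : ℤ) + (m.choose (j+1) : ℤ)) * ((j:ℤ)+1) := by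
          have := congrArg (Nat.cast : ℕ → ℤ) h1
          push_cast [h2] at this
          push_cast
          linarith [this]
        have h2' : (((m+1).choose (j+1) : ℕ) : ℤ) = (m.choose j : ℤ) + (m.choose (j+1) : ℤ) := by
          exact_mod_cast congrArg (Nat.cast : ℕ → ℤ) h2
        rw [h2']
        linear_combination ((-1:ℤ)^(n+m) * (m.factorial : ℤ) * (St n m : ℤ)) * h1'
      rw [Finset.sum_congr rfl e, Finset.sum_add_distrib, ← Finset.mul_sum, ← Finset.mul_sum,
        ih (j+1), ih j]
      have hs : St (n+1+1) (j+1+1) = (j+1+1) * St (n+1) (j+1+1) + St (n+1) (j+1) :=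
        St_succ_succ (n+1) (j+1)
      rw [hs]
      have hf : (((j+1).factorial : ℕ) : ℤ) = ((j:ℤ)+1) * (j.factorial : ℤ) := by
        rw [Nat.factorial_succ]; push_cast; ring
      push_cast [hf]
      ring

lemma comb (n k : ℕ) :
    (∑ m ∈ range (n+1), (-1:ℤ)^(n+m) * (m.factorial : ℤ) * (St n m : ℤ) * ((m:ℤ)+1)^k)
      = ∑ j ∈ range (min n k + 1),
          ((j.factorial : ℤ))^2 * (St (n+1) (j+1) : ℤ) * (St (k+1) (j+1) : ℤ) := by
  have e1 : ∀ m ∈ range (n+1),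
      (-1:ℤ)^(n+m) * (m.factorial : ℤ) * (St n m : ℤ) * ((m:ℤ)+1)^k
        = ∑ j ∈ range (k+1), ((St (k+1) (j+1) : ℤ) * (j.factorial : ℤ))
            * ((-1:ℤ)^(n+m) * (m.factorial : ℤ) * (St n m : ℤ) * ((m.choose j : ℕ) : ℤ)) := by
    intro m _
    have hp := congrArg (Nat.cast : ℕ → ℤ) (pow_succ_eq k m)
    push_cast at hp
    rw [hp, Finset.mul_sum]
    exact Finset.sum_congr rfl fun j _ => by ring
  rw [Finset.sum_congr rfl e1, Finset.sum_comm]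
  have e2 : ∀ j ∈ range (k+1),
      (∑ m ∈ range (n+1), ((St (k+1) (j+1) : ℤ) * (j.factorial : ℤ))
          * ((-1:ℤ)^(n+m) * (m.factorial : ℤ) * (St n m : ℤ) * ((m.choose j : ℕ) : ℤ)))
        = ((j.factorial : ℤ))^2 * (St (n+1) (j+1) : ℤ) * (St (k+1) (j+1) : ℤ) := by
    intro j _
    rw [← Finset.mul_sum, idA n j]
    ring
  rw [Finset.sum_congr rfl e2]
  refine (Finset.sum_subset (Finset.range_subset_range.mpr (by omega)) ?_).symm
  intro j hj hj'
  simp only [Finset.mem_range] at hj hj'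
  rw [St_eq_zero (show n+1 < j+1 by omega)]
  push_cast
  ring

lemma S_eq_St (n m : ℕ) : S n m = (St n m : ℝ) := by
  rw [S]
  have hz := congrArg (Int.cast : ℤ → ℝ) (es_eq n m)
  push_cast at hz
  rw [hz]
  have hm : (m.factorial : ℝ) ≠ 0 := by exact_mod_cast m.factorial_ne_zero
  field_simp
  linear_combination (St n m : ℝ) * neg_one_sq_pow m

/-- coefficients of `(1 - e^{-y})^m` -/
noncomputable def cc (n m : ℕ) : ℝ :=
  ∑ l ∈ range (m+1), (-1:ℝ)^l * (m.choose l : ℝ) * (-(l:ℝ))^n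

lemma cc_eq (n m : ℕ) : cc n m = (-1:ℝ)^(n+m) * (m.factorial : ℝ) * (St n m : ℝ) := by
  rw [cc]
  have e : ∀ l ∈ range (m+1), (-1:ℝ)^l * (m.choose l : ℝ) * (-(l:ℝ))^n
      = (-1:ℝ)^n * ((-1:ℝ)^l * (m.choose l : ℝ) * (l:ℝ)^n) := by
    intro l _
    rw [neg_pow]
    ring
  rw [Finset.sum_congr rfl e, ← Finset.mul_sum]
  have hz := congrArg (Int.cast : ℤ → ℝ) (es_eq n m)
  push_cast at hz
  rw [hz, pow_add]
  ring

lemma hasSum_cc (m : ℕ) (y : ℝ) :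
    HasSum (fun n : ℕ => cc n m * y^n / n.factorial) ((1 - Real.exp (-y))^m) := by
  have hb : (1 - Real.exp (-y))^m
      = ∑ l ∈ range (m+1), (-1:ℝ)^l * (m.choose l : ℝ) * Real.exp (-(l:ℝ)*y) := by
    rw [sub_eq_add_neg, add_comm, add_pow]
    refine Finset.sum_congr rfl fun l hl => ?_
    rw [one_pow, neg_pow]
    have : Real.exp (-y) ^ l = Real.exp (-(l:ℝ)*y) := by
      rw [← Real.exp_nat_mul]
      congr 1
      ring
    rw [this]
    ring
  have he : ∀ l : ℕ, HasSum (fun n : ℕ => (-(l:ℝ)*y)^n / n.factorial) (Real.exp (-(l:ℝ)*y)) := by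
    intro l
    rw [Real.exp_eq_exp_ℝ]
    exact NormedSpace.expSeries_div_hasSum_exp _
  have h2 : HasSum (fun n : ℕ => ∑ l ∈ range (m+1),
        (-1:ℝ)^l * (m.choose l : ℝ) * ((-(l:ℝ)*y)^n / n.factorial))
      (∑ l ∈ range (m+1), (-1:ℝ)^l * (m.choose l : ℝ) * Real.exp (-(l:ℝ)*y)) :=
    hasSum_sum fun l _ => (he l).mul_left _
  rw [hb]
  refine HasSum.congr_fun h2 fun n => ?_
  rw [cc, Finset.sum_mul, Finset.sum_div]
  refine Finset.sum_congr rfl fun l _ => ?_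
  rw [mul_pow]
  ring

lemma hasSum_abs (m : ℕ) (x : ℝ) :
    HasSum (fun n : ℕ => (m.factorial : ℝ) * (St n m : ℝ) * |x|^n / n.factorial)
      ((Real.exp |x| - 1)^m) := by
  have h := (hasSum_cc m (-|x|)).mul_left ((-1:ℝ)^m)
  have hval : (-1:ℝ)^m * (1 - Real.exp (-(-|x|)))^m = (Real.exp |x| - 1)^m := by
    rw [neg_neg, ← neg_pow, neg_sub]
  rw [hval] at h
  refine HasSum.congr_fun h fun n => ?_
  rw [cc_eq, neg_pow, pow_add]
  have h1 : (-1:ℝ)^(m*2) = 1 := by rw [pow_mul, sq]; exact neg_one_sq_pow m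
  have h2 : (-1:ℝ)^(n*2) = 1 := by rw [pow_mul, sq]; exact neg_one_sq_pow n
  field_simp
  linear_combination (-((St n m : ℝ) * |x|^n * (-1:ℝ)^(n*2))) * h1
    + (-((St n m : ℝ) * |x|^n)) * h2
lemma coeff_eq_zero {a : ℕ → ℝ}
    (h : ∀ᶠ x in 𝓝[≠] (0:ℝ), HasSum (fun m => a m * x ^ m) 0) : ∀ n, a n = 0 := by
  set p : FormalMultilinearSeries ℝ ℝ ℝ := FormalMultilinearSeries.ofScalars ℝ a with hp
  have hcoeff : ∀ n, p.coeff n = a n := by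
    intro n
    simp [FormalMultilinearSeries.coeff, hp, FormalMultilinearSeries.ofScalars,
      List.prod_ofFn]
  set f : ℝ → ℝ := fun x => if x = 0 then a 0 else 0 with hf
  have hfp : HasFPowerSeriesAt f p 0 := by
    rw [hasFPowerSeriesAt_iff]
    rw [eventually_nhdsWithin_iff] at h
    filter_upwards [h] with z hz
    rcases eq_or_ne z 0 with rfl | hz0
    · have key : HasSum (fun n : ℕ => (0:ℝ) ^ n • p.coeff n) (a 0) := by
        have h0 : ∀ n : ℕ, n ∉ ({0} : Finset ℕ) → (0:ℝ) ^ n • p.coeff n = 0 := by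
          intro n hn
          simp only [Finset.mem_singleton] at hn
          simp [zero_pow hn]
        have h1 : HasSum (fun n : ℕ => (0:ℝ) ^ n • p.coeff n)
            (∑ n ∈ ({0} : Finset ℕ), (0:ℝ) ^ n • p.coeff n) := hasSum_sum_of_ne_finset_zero h0
        simpa [hcoeff] using h1
      simpa [hf] using key
    · have h2 := hz (by simpa using hz0)
      have : (fun n : ℕ => z ^ n • p.coeff n) = fun n => a n * z ^ n := by
        funext n; simp [hcoeff, mul_comm]
      rw [zero_add, this, hf]
      simp only [if_neg hz0]
      exact h2
  have ha0 : a 0 = 0 := by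
    have hc : ContinuousAt f 0 := hfp.continuousAt
    have h1 : Tendsto f (𝓝[≠] (0:ℝ)) (𝓝 (f 0)) :=
      (hc.tendsto).mono_left nhdsWithin_le_nhds
    have h2 : Tendsto f (𝓝[≠] (0:ℝ)) (𝓝 0) := by
      apply Tendsto.congr' _ tendsto_const_nhds
      filter_upwards [self_mem_nhdsWithin] with x hx
      simp only [Set.mem_compl_iff, Set.mem_singleton_iff] at hx
      simp [hf, hx]
    have := tendsto_nhds_unique h1 h2
    simpa [hf] using this
  have hfzero : f = 0 := by
    funext x
    rcases eq_or_ne x 0 with rfl | hx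
    · simp [hf, ha0]
    · simp [hf, hx]
  have hp0 : p = 0 := HasFPowerSeriesAt.eq_zero (hfzero ▸ hfp)
  intro n
  rw [← hcoeff n, hp0]
  simp [FormalMultilinearSeries.coeff]

lemma abs_one_sub_exp_le (x : ℝ) : |1 - Real.exp (-x)| ≤ Real.exp |x| - 1 := by
  rcases le_or_gt 0 x with h | h
  · rw [abs_of_nonneg h, abs_of_nonneg]
    · linarith [Real.add_one_le_exp x, Real.add_one_le_exp (-x)]
    · have : Real.exp (-x) ≤ 1 := Real.exp_le_one_iff.mpr (by linarith)
      linarith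
  · rw [abs_of_neg h, abs_of_nonpos]
    · have : Real.exp (-x) = Real.exp (-x) := rfl
      linarith
    · have : (1:ℝ) ≤ Real.exp (-x) := Real.one_le_exp_iff.mpr (by linarith)
      linarith

/-- the coefficient sequence -/
noncomputable def Czk (k N : ℕ) : ℝ :=
  ∑ m ∈ range (N+1), (-1:ℝ)^(N+m) * (m.factorial : ℝ) * (St N m : ℝ) * ((m:ℝ)+1)^k

lemma hasSum_main (k : ℕ) : ∀ᶠ x in 𝓝[≠] (0:ℝ),
    HasSum (fun N : ℕ => Czk k N * x^N / N.factorial)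
      (Li (-(k : ℤ)) (1 - Real.exp (-x)) / (1 - Real.exp (-x))) := by
  have hlog : (0:ℝ) < Real.log 2 := Real.log_pos (by norm_num)
  have hev : ∀ᶠ x in 𝓝 (0:ℝ), |x| < Real.log 2 := by
    filter_upwards [Metric.ball_mem_nhds (0:ℝ) hlog] with x hx
    simpa [Real.dist_eq] using hx
  filter_upwards [eventually_nhdsWithin_of_eventually_nhds hev, self_mem_nhdsWithin]
    with x hxl hx0'
  have hx0 : x ≠ 0 := by simpa using hx0'
  set z := 1 - Real.exp (-x) with hz
  have hz0 : z ≠ 0 := by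
    rw [hz]
    intro hcon
    have h1 : Real.exp (-x) = 1 := by linarith
    rw [Real.exp_eq_one_iff] at h1
    exact hx0 (by linarith)
  have hexp2 : Real.exp |x| < 2 := by
    rw [show (2:ℝ) = Real.exp (Real.log 2) from (Real.exp_log (by norm_num)).symm]
    exact Real.exp_lt_exp.mpr hxl
  have hzlt : |z| < 1 := lt_of_le_of_lt (abs_one_sub_exp_le x) (by linarith)
  set r := Real.exp |x| - 1 with hr
  have hr0 : 0 ≤ r := by
    have := Real.add_one_le_exp |x|
    have := abs_nonneg x
    rw [hr]; linarith
  have hr1 : r < 1 := by rw [hr]; linarith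
  have s1 : Summable (fun m : ℕ => ((m:ℝ)+1)^k * z^m) := geom_aux k hzlt
  have s2 : Summable (fun m : ℕ => ((m:ℝ)+1)^k * r^m) :=
    geom_aux k (by rwa [abs_of_nonneg hr0])
  have T1 : HasSum (fun m : ℕ => ((m:ℝ)+1)^k * z^m) (Li (-(k:ℤ)) z / z) := by
    have hLi : Li (-(k:ℤ)) z = z * ∑' m : ℕ, ((m:ℝ)+1)^k * z^m := by
      rw [Li, ← tsum_mul_left]
      refine tsum_congr fun m => ?_
      rw [zpow_neg, zpow_natCast, div_eq_mul_inv, inv_inv]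
      ring
    have h1 := s1.hasSum
    rwa [show (∑' m : ℕ, ((m:ℝ)+1)^k * z^m) = Li (-(k:ℤ)) z / z by
      rw [hLi, mul_div_cancel_left₀ _ hz0]] at h1
  have Tm : ∀ m : ℕ, HasSum (fun n : ℕ => ((m:ℝ)+1)^k * (cc n m * x^n / n.factorial))
      (((m:ℝ)+1)^k * z^m) := by
    intro m
    have := (hasSum_cc m x).mul_left (((m:ℝ)+1)^k)
    rwa [← hz] at this
  have Tabs : ∀ m : ℕ, HasSum
      (fun n : ℕ => ((m:ℝ)+1)^k * ((m.factorial : ℝ) * (St n m : ℝ) * |x|^n / n.factorial))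
      (((m:ℝ)+1)^k * r^m) := by
    intro m
    have := (hasSum_abs m x).mul_left (((m:ℝ)+1)^k)
    rwa [← hr] at this
  set F : ℕ × ℕ → ℝ := fun p => ((p.1:ℝ)+1)^k * (cc p.2 p.1 * x^p.2 / p.2.factorial) with hF
  have habs : ∀ p : ℕ × ℕ, |F p|
      = ((p.1:ℝ)+1)^k * ((p.1.factorial : ℝ) * (St p.2 p.1 : ℝ) * |x|^p.2 / p.2.factorial) := by
    rintro ⟨m, n⟩
    rw [hF]
    simp only
    rw [abs_mul, abs_div, abs_mul]
    have e0 : |((m:ℝ)+1)^k| = ((m:ℝ)+1)^k := by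
      rw [abs_of_nonneg]; positivity
    have e1 : |cc n m| = (m.factorial : ℝ) * (St n m : ℝ) := by
      rw [cc_eq, abs_mul, abs_mul, abs_pow, abs_neg, abs_one, one_pow, one_mul,
        abs_of_nonneg (by positivity : (0:ℝ) ≤ (m.factorial : ℝ)),
        abs_of_nonneg (by positivity : (0:ℝ) ≤ (St n m : ℝ))]
    have e2 : |x^n| = |x|^n := abs_pow x n
    have e3 : |(n.factorial : ℝ)| = (n.factorial : ℝ) := by
      rw [abs_of_nonneg]; positivity
    rw [e0, e1, e2, e3]
  have hsummable : Summable fun p : ℕ × ℕ => |F p| := by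
    rw [summable_prod_of_nonneg (fun p => abs_nonneg (F p))]
    constructor
    · intro m
      exact ((Tabs m).summable).congr fun n => (habs (m, n)).symm
    · refine s2.congr fun m => ?_
      rw [tsum_congr (fun n => habs (m, n))]
      exact ((Tabs m).tsum_eq).symm
  have hFsummable : Summable F := hsummable.of_abs
  have hFtsum : HasSum F (Li (-(k:ℤ)) z / z) := by
    have h1 := hFsummable.hasSum
    have h2 : HasSum (fun m : ℕ => ((m:ℝ)+1)^k * z^m) (∑' p, F p) :=
      h1.prod_fiberwise fun m => Tm m
    rwa [h2.unique T1] at h1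
  have hswap : HasSum (fun p : ℕ × ℕ => F (p.2, p.1)) (Li (-(k:ℤ)) z / z) :=
    ((Equiv.prodComm ℕ ℕ).hasSum_iff).mpr hFtsum
  have hfiber2 : ∀ n : ℕ, HasSum (fun m : ℕ => F (m, n)) (Czk k n * x^n / n.factorial) := by
    intro n
    have h0 : ∀ m ∉ range (n+1), F (m, n) = 0 := by
      intro m hm
      rw [Finset.mem_range, not_lt] at hm
      rw [hF]
      simp only
      rw [cc_eq, St_eq_zero (show n < m by omega)]
      simp
    have h1 : HasSum (fun m : ℕ => F (m, n)) (∑ m ∈ range (n+1), F (m, n)) :=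
      hasSum_sum_of_ne_finset_zero h0
    have h2 : (∑ m ∈ range (n+1), F (m, n)) = Czk k n * x^n / n.factorial := by
      rw [Czk, Finset.sum_mul, Finset.sum_div]
      refine Finset.sum_congr rfl fun m _ => ?_
      rw [hF]
      simp only
      rw [cc_eq]
      ring
    rwa [h2] at h1
  exact hswap.prod_fiberwise fun n => hfiber2 n

end PolyB

/-- Closed formula for poly-Bernoulli numbers of negative index:
`B_n^{(-k)} = ∑_{j=0}^{min(n,k)} (j!)² S(n+1,j+1) S(k+1,j+1)`. -/
theorem polyBernoulli_neg_index_formula (n k : ℕ) (B : ℕ → ℝ)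
    (hB : ∀ᶠ x in 𝓝[≠] (0 : ℝ),
      HasSum (fun m : ℕ => B m * x ^ m / (m.factorial : ℝ))
        (Li (-(k : ℤ)) (1 - Real.exp (-x)) / (1 - Real.exp (-x)))) :
    B n = ∑ j ∈ Finset.range (min n k + 1),
      ((j.factorial : ℝ)) ^ 2 * S (n + 1) (j + 1) * S (k + 1) (j + 1) := by
  have hmain := PolyB.hasSum_main k
  have hdiff : ∀ᶠ x in 𝓝[≠] (0:ℝ),
      HasSum (fun m : ℕ => ((B m - PolyB.Czk k m) / m.factorial) * x ^ m) 0 := by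
    filter_upwards [hB, hmain] with x h1 h2
    have h3 := h1.sub h2
    rw [sub_self] at h3
    refine HasSum.congr_fun h3 fun m => ?_
    ring
  have hzero := PolyB.coeff_eq_zero hdiff n
  have hfac : (n.factorial : ℝ) ≠ 0 := by exact_mod_cast n.factorial_ne_zero
  have hBn : B n = PolyB.Czk k n := by
    have h4 : B n - PolyB.Czk k n = 0 := by
      field_simp at hzero
      simpa using hzero
    linarith
  rw [hBn]
  have hc := congrArg (Int.cast : ℤ → ℝ) (PolyB.comb n k)
  push_cast at hc
  rw [PolyB.Czk, hc]
  refine Finset.sum_congr rfl fun j _ => ?_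
  rw [PolyB.S_eq_St, PolyB.S_eq_St]
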